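/- AbC does not preserve monotonicity. Concretely, for A = {a,b,c,d} and F = {f_p, f_v}, there exists k_1 ∈ ℤ_+ such that for all k ≥ k_1: the profile σ consisting of k voters ranking a≻b≻c≻d, 2k voters ranking d≻c≻a≻b, k voters ranking b≻a≻c≻d, 3k voters ranking c≻a≻b≻d, and 3k voters ranking d≻b≻a≻c satisfies AbC(F,σ) = {f_v}, hence f_{AbC}^F(σ) = (a ≻ b ≻ c ≻ d); while the profile σ', obtained from σ by the k voters ranking a≻b≻c≻d and k of the voters ranking d≻c≻a≻b each raising b by one position, satisfies AbC(F,σ') = {f_p}, hence f_{AbC}^F(σ') = (d ≻ c ≻ b ≻ a). Thus promoting b strictly increases its rank in the induced output (from 2 to 3), violating monotonicity even though f_p and f_v are both monotonic. -/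

import Mathlib

open scoped Classical

noncomputable section

/-- A strict ranking of the alternatives `A` among `m` positions: each alternative is
assigned its (0-indexed) position. -/
abbrev Ranking (A : Type*) (m : ℕ) := A ≃ Fin m

/-- A weak ranking: a complete and transitive binary relation (ties allowed).
`ge a b` means `a` is ranked weakly above `b`. -/
structure WeakRanking (A : Type*) where
  ge : A → A → Prop
  total : ∀ a b, ge a b ∨ ge b a
  trans : ∀ a b c, ge a b → ge b c → ge a c

namespace WeakRanking

variable {A : Type*}

/-- `a` is ranked strictly above `b`. -/
def strict (r : WeakRanking A) (a b : A) : Prop := r.ge a b ∧ ¬ r.ge b a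

/-- `a` and `b` are tied. -/
def tied (r : WeakRanking A) (a b : A) : Prop := r.ge a b ∧ r.ge b a

/-- The reversed weak ranking. -/
def rev (r : WeakRanking A) : WeakRanking A where
  ge a b := r.ge b a
  total a b := r.total b a
  trans _ _ _ h1 h2 := r.trans _ _ _ h2 h1

/-- The all-tied weak ranking. -/
def allTied (A : Type*) : WeakRanking A :=
  ⟨fun _ _ => True, fun _ _ => Or.inl trivial, fun _ _ _ _ _ => trivial⟩

end WeakRanking

variable {A : Type*} {m : ℕ}

/-- The weak ranking induced by a strict ranking (smaller position = ranked higher). -/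
def Ranking.toWeak (r : Ranking A m) : WeakRanking A where
  ge a b := r a ≤ r b
  total a b := le_total _ _
  trans _ _ _ h1 h2 := le_trans h1 h2

/-- The position-reversal permutation. -/
def finRevPerm (m : ℕ) : Equiv.Perm (Fin m) :=
  ⟨Fin.rev, Fin.rev, Fin.rev_rev, Fin.rev_rev⟩

/-- The reversed strict ranking. -/
def Ranking.revR (r : Ranking A m) : Ranking A m := r.trans (finRevPerm m)

/-- Kendall-Tau distance with ties between two weak rankings: the sum over unordered pairs
of distinct alternatives of `D + T/2`, realized as half the sum over ordered pairs. -/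
def KT [Fintype A] (r1 r2 : WeakRanking A) : ℝ :=
  (∑ p ∈ Finset.univ.offDiag,
      ((if (r1.strict p.1 p.2 ∧ r2.strict p.2 p.1) ∨ (r1.strict p.2 p.1 ∧ r2.strict p.1 p.2)
          then (1 : ℝ) else 0)
        + (if r1.tied p.1 p.2 ∨ r2.tied p.1 p.2 then (1 : ℝ) else 0) / 2)) / 2

/-- A profile: the list of the voters' strict rankings. -/
abbrev Profile (A : Type*) (m : ℕ) := List (Ranking A m)

/-- A social welfare function. -/
abbrev SWF (A : Type*) (m : ℕ) := Profile A m → WeakRanking A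

/-- Reverse every voter's ranking. -/
def revProfile (σ : Profile A m) : Profile A m := σ.map Ranking.revR

/-- A monotone positional scoring vector `1 = s₁ ≥ s₂ ≥ … ≥ sₘ = 0`. -/
structure ScoreVec (m : ℕ) where
  s : Fin m → ℝ
  anti : Antitone s
  first : ∀ h : 0 < m, s ⟨0, h⟩ = 1
  last : ∀ h : 0 < m, s ⟨m - 1, Nat.sub_lt h Nat.one_pos⟩ = 0

/-- Total score of alternative `a` in profile `σ`. -/
def totalScore (sv : ScoreVec m) (σ : Profile A m) (a : A) : ℝ :=
  (σ.map fun r => sv.s (r a)).sum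

/-- The positional scoring rule associated to a scoring vector. -/
def posSWF (sv : ScoreVec m) : SWF A m := fun σ =>
  { ge := fun a b => totalScore sv σ b ≤ totalScore sv σ a
    total := fun _ _ => le_total _ _
    trans := fun _ _ _ h1 h2 => le_trans h2 h1 }

/-- The plurality scoring vector `(1,0,…,0)`. -/
def pluralityVec (m : ℕ) (hm : 2 ≤ m) : ScoreVec m where
  s i := if i.val = 0 then 1 else 0
  anti := by
    intro i j hij
    have h' : i.val ≤ j.val := hij
    dsimp only
    by_cases hj : j.val = 0
    · have hi : i.val = 0 := by omega
      simp [hi, hj]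
    · by_cases hi : i.val = 0 <;> simp [hi, hj]
  first h := by simp
  last h := by
    have h' : m - 1 ≠ 0 := by omega
    simp [h']

/-- The veto scoring vector `(1,…,1,0)`. -/
def vetoVec (m : ℕ) (hm : 2 ≤ m) : ScoreVec m where
  s i := if i.val = m - 1 then 0 else 1
  anti := by
    intro i j hij
    have h' : i.val ≤ j.val := hij
    dsimp only
    by_cases hi : i.val = m - 1
    · have hj : j.val = m - 1 := by have := j.isLt; omega
      simp [hi, hj]
    · by_cases hj : j.val = m - 1 <;> simp [hi, hj]
  first h := by
    have h' : (0 : ℕ) ≠ m - 1 := by omega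
    simp [h']
  last h := by simp

/-- The reverse scoring vector, `s'_j = 1 - s_{m+1-j}`. -/
def ScoreVec.revVec (sv : ScoreVec m) : ScoreVec m where
  s j := 1 - sv.s j.rev
  anti := by
    intro i j hij
    have h1 : j.rev ≤ i.rev := by
      simp only [Fin.le_def, Fin.val_rev]
      have h' : i.val ≤ j.val := hij
      omega
    have h2 := sv.anti h1
    dsimp only
    linarith
  first h := by
    have h1 : (⟨0, h⟩ : Fin m).rev = ⟨m - 1, Nat.sub_lt h Nat.one_pos⟩ := by
      ext
      simp [Fin.val_rev]
    try dsimp only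
    rw [h1, sv.last h]
    ring
  last h := by
    have h1 : (⟨m - 1, Nat.sub_lt h Nat.one_pos⟩ : Fin m).rev = ⟨0, h⟩ := by
      ext
      simp only [Fin.val_rev]
      omega
    try dsimp only
    rw [h1, sv.first h]
    ring

/-- One side of the split of the profile `σ` given by assignment `β`. -/
def subProfile (σ : Profile A m) (β : Fin σ.length → Bool) (b : Bool) : Profile A m :=
  ((List.finRange σ.length).filter fun i => β i == b).map σ.get

/-- Apply an SWF, producing the all-tied ranking on an empty (sub)profile. -/
def applySplit (f : SWF A m) (σ : Profile A m) : WeakRanking A :=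
  if σ = [] then WeakRanking.allTied A else f σ

/-- Expected Kendall-Tau disagreement of `f` between the two sides of a uniformly random
split of `σ` (each voter placed independently and uniformly on one of the two sides). -/
def expDisagree [Fintype A] (f : SWF A m) (σ : Profile A m) : ℝ :=
  (∑ β : Fin σ.length → Bool,
      KT (applySplit f (subProfile σ β true)) (applySplit f (subProfile σ β false)))
    / 2 ^ σ.length

/-- Aggregation by Consistency over a set of SWFs: the rules minimizing expected
disagreement across a random split. -/
def AbC [Fintype A] (F : Set (SWF A m)) (σ : Profile A m) : Set (SWF A m) :=
  {f | f ∈ F ∧ ∀ g ∈ F, expDisagree f σ ≤ expDisagree g σ}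

/-- Aggregation by Consistency over a set of positional scoring vectors. -/
def AbCVec [Fintype A] (F : Set (ScoreVec m)) (σ : Profile A m) : Set (ScoreVec m) :=
  {sv | sv ∈ F ∧ ∀ sv' ∈ F, expDisagree (posSWF sv) σ ≤ expDisagree (posSWF sv') σ}

/-- All permutations of the positions that fix every position outside `S`. -/
def permsOn (S : Finset (Fin m)) : List (Equiv.Perm (Fin m)) :=
  (Finset.univ.filter fun π : Equiv.Perm (Fin m) => ∀ i ∉ S, π i = i).toList

/-- The `k`-shuffling of profile `σ` with respect to the set of positions `S`: each voter's
ranking is replaced by `k·m!` copies, split evenly among the `|S|!` permutations of `S`. -/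
def shuffle (S : Finset (Fin m)) (k : ℕ) (σ : Profile A m) : Profile A m :=
  σ.flatMap fun r =>
    (permsOn S).flatMap fun π =>
      List.replicate (k * Nat.factorial m / Nat.factorial S.card) (r.trans π)

/-- The positions `2,…,m` (0-indexed: `1,…,m-1`). -/
def tailPositions (m : ℕ) : Finset (Fin m) := Finset.univ.filter fun i => 1 ≤ i.val

/-- Number of voters ranking `a` first. -/
def topCount (σ : Profile A m) (a : A) : ℕ := σ.countP fun r => (r a).val == 0

/-- A weak ranking has no ties among distinct alternatives. -/
def NoTies (w : WeakRanking A) : Prop := ∀ a b : A, a ≠ b → ¬ w.tied a b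

/-- Probability (over a uniformly random split of `σ`) that the outputs of `f` on the two
sides order `a` and `b` strictly oppositely. -/
def probD [Fintype A] (f : SWF A m) (σ : Profile A m) (a b : A) : ℝ :=
  ((Finset.univ.filter fun β : Fin σ.length → Bool =>
      ((applySplit f (subProfile σ β true)).strict a b ∧
        (applySplit f (subProfile σ β false)).strict b a) ∨
      ((applySplit f (subProfile σ β true)).strict b a ∧
        (applySplit f (subProfile σ β false)).strict a b)).card : ℝ) / 2 ^ σ.length

/-- Probability (over a uniformly random split of `σ`) that `a` and `b` are tied in the
output of `f` on at least one side. -/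
def probT [Fintype A] (f : SWF A m) (σ : Profile A m) (a b : A) : ℝ :=
  ((Finset.univ.filter fun β : Fin σ.length → Bool =>
      (applySplit f (subProfile σ β true)).tied a b ∨
      (applySplit f (subProfile σ β false)).tied a b).card : ℝ) / 2 ^ σ.length

/-- A rule picking rule over sets of positional scoring vectors. -/
abbrev RPRVec (A : Type*) (m : ℕ) := Set (ScoreVec m) → Profile A m → Set (ScoreVec m)

/-- An RPR returns a nonempty subset of the candidate rules. -/
def IsRPR (Z : RPRVec A m) : Prop := ∀ F σ, Z F σ ⊆ F ∧ (Z F σ).Nonempty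

/-- Anonymity of an RPR: invariance under permuting voters. -/
def AnonymousRPR (Z : RPRVec A m) : Prop :=
  ∀ (F : Set (ScoreVec m)) (σ σ' : Profile A m), σ.Perm σ' → Z F σ = Z F σ'

/-- Reversal symmetry of an RPR. -/
def ReversalSymmetric (Z : RPRVec A m) : Prop :=
  ∀ F : Set (ScoreVec m), ScoreVec.revVec '' F = F →
    ∀ σ : Profile A m, ScoreVec.revVec '' (Z F σ) = Z F (revProfile σ)

/-- Plurality-shuffling consistency of an RPR. -/
def PSConsistent (hm : 2 ≤ m) (Z : RPRVec A m) : Prop :=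
  ∀ F : Set (ScoreVec m), F.Finite → pluralityVec m hm ∈ F →
    ∀ σ : Profile A m, NoTies (posSWF (pluralityVec m hm) σ) →
      ∃ k : ℕ, 1 ≤ k ∧ ∀ k', k ≤ k' →
        Z F (shuffle (tailPositions m) k' σ) = {pluralityVec m hm}

/-- Union consistency of an RPR. -/
def UnionConsistent (Z : RPRVec A m) : Prop :=
  ∀ (F : Set (ScoreVec m)) (σa σb : Profile A m), (Z F σa ∩ Z F σb).Nonempty →
    Z F (σa ++ σb) = Z F σa ∩ Z F σb

/-- The welfare-maximizing RPR with utility function `u`. -/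
def welfareMax (u : Ranking A m → WeakRanking A → ℝ) : RPRVec A m := fun F σ =>
  {sv | sv ∈ F ∧ ∀ sv' ∈ F,
      (σ.map fun r => u r (posSWF sv' σ)).sum ≤ (σ.map fun r => u r (posSWF sv σ)).sum}

/-- The SWF induced by a (vector-valued) RPR, where it is singleton-valued. -/
def inducedVec (Z : RPRVec A m) (F : Set (ScoreVec m)) : SWF A m := fun σ =>
  if h : ∃ sv, Z F σ = {sv} then posSWF h.choose σ else WeakRanking.allTied A

/-- The SWF induced by an (SWF-valued) RPR, where it is singleton-valued. -/
def inducedSWF (Z : Set (SWF A m) → Profile A m → Set (SWF A m)) (F : Set (SWF A m)) :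
    SWF A m := fun σ =>
  if h : ∃ f, Z F σ = {f} then h.choose σ else WeakRanking.allTied A

/-- The SWF induced by AbC over scoring vectors. -/
def inducedAbCVec [Fintype A] (F : Set (ScoreVec m)) : SWF A m := fun σ =>
  if h : ∃ sv, AbCVec F σ = {sv} then posSWF h.choose σ else WeakRanking.allTied A

/-- Anonymity of an SWF. -/
def AnonymousSWF (f : SWF A m) : Prop :=
  ∀ σ σ' : Profile A m, σ.Perm σ' → f σ = f σ'

/-- Relabeling of a weak ranking along a permutation of the alternatives. -/
def permuteWeak (π : Equiv.Perm A) (w : WeakRanking A) : WeakRanking A where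
  ge a b := w.ge (π.symm a) (π.symm b)
  total a b := w.total _ _
  trans _ _ _ h1 h2 := w.trans _ _ _ h1 h2

/-- Neutrality of an SWF: permuting the alternatives permutes the output accordingly. -/
def NeutralSWF (f : SWF A m) : Prop :=
  ∀ (π : Equiv.Perm A) (σ : Profile A m),
    f (σ.map fun r => π.symm.trans r) = permuteWeak π (f σ)

/-- `a` pairwise defeats `b` in profile `σ`. -/
def pairwiseDefeats (σ : Profile A m) (a b : A) : Prop :=
  (σ.countP fun r => decide (r b < r a)) < (σ.countP fun r => decide (r a < r b))

/-- A set `S` is dominant if every member pairwise defeats every non-member. -/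
def DominantSet [Fintype A] (σ : Profile A m) (S : Finset A) : Prop :=
  ∀ a ∈ S, ∀ b ∉ S, pairwiseDefeats σ a b

/-- The Smith set: the smallest dominant set (the intersection of all dominant sets). -/
def SmithSet [Fintype A] (σ : Profile A m) : Finset A :=
  Finset.univ.filter fun a => ∀ S : Finset A, DominantSet σ S → a ∈ S

/-- `a` is among the top-ranked alternatives of `w`. -/
def isTop (w : WeakRanking A) (a : A) : Prop := ∀ b, w.ge a b

def SmithCriterion [Fintype A] (f : SWF A m) : Prop :=
  ∀ (σ : Profile A m) (a : A), isTop (f σ) a → a ∈ SmithSet σ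

def CondorcetConsistent [Fintype A] (f : SWF A m) : Prop :=
  ∀ (σ : Profile A m) (c : A), SmithSet σ = {c} →
    ∀ a, isTop (f σ) a → a ∈ SmithSet σ

def MajorityWinnerCriterion [Fintype A] (f : SWF A m) : Prop :=
  ∀ (σ : Profile A m) (c : A), SmithSet σ = {c} → σ.length < 2 * topCount σ c →
    ∀ a, isTop (f σ) a → a ∈ SmithSet σ

def PairwiseMajorityConsistent (f : SWF A m) : Prop :=
  ∀ (σ : Profile A m) (r : WeakRanking A),
    (∀ a b, r.strict a b ↔ pairwiseDefeats σ a b) → f σ = r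

def UnanimousSWF (f : SWF A m) : Prop :=
  ∀ (σ : Profile A m) (r : Ranking A m), σ ≠ [] → (∀ x ∈ σ, x = r) →
    f σ = Ranking.toWeak r

/-- Rank of `a` in weak ranking `w`: one plus the number of alternatives strictly above. -/
def rankIn [Fintype A] (w : WeakRanking A) (a : A) : ℕ :=
  1 + (Finset.univ.filter fun b => w.strict b a).card

/-- `r'` is obtained from `r` by (weakly) raising `a`, everything else unchanged. -/
def RaisesWeak (a : A) (r r' : Ranking A m) : Prop :=
  r' a ≤ r a ∧ ∀ b c : A, b ≠ a → c ≠ a → (r b < r c ↔ r' b < r' c)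

/-- Monotonicity of an SWF: raising an alternative never hurts its rank. -/
def MonotonicSWF [Fintype A] (f : SWF A m) : Prop :=
  ∀ (a : A) (σ σ' : Profile A m), List.Forall₂ (RaisesWeak a) σ σ' →
    rankIn (f σ') a ≤ rankIn (f σ) a

/-- Total score of `a` for a list of (position ↦ alternative) ballots of length `ℓ`. -/
def ballotScore [Fintype A] {ℓ : ℕ} (sv : ScoreVec ℓ) (P : List (Fin ℓ → A)) (a : A) : ℝ :=
  (P.map fun b => ∑ i : Fin ℓ, if b i = a then sv.s i else 0).sum

/-- A scoring vector achieves perfect consistency on the given split `(P1, P2)`. -/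
def PerfectConsistency [Fintype A] {ℓ : ℕ} (sv : ScoreVec ℓ)
    (P1 P2 : List (Fin ℓ → A)) : Prop :=
  ∀ a b : A, a ≠ b →
    0 < (ballotScore sv P1 a - ballotScore sv P1 b) *
        (ballotScore sv P2 a - ballotScore sv P2 b)

/-- Complete a `k`-partial ballot to a full ballot on `m` positions by placing the missing
alternatives at the bottom, in a fixed order. -/
def completeBallot [Fintype A] [LinearOrder A] {k m : ℕ} (hk : 0 < k)
    (b : Fin k → A) : Fin m → A := fun j =>
  if h : j.val < k then b ⟨j.val, h⟩
  else ((Finset.univ \ Finset.univ.image b).sort (· ≤ ·)).getD (j.val - k) (b ⟨0, hk⟩)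

/-- `k`-shuffling for (position ↦ alternative) ballots. -/
def shuffleBallots {m : ℕ} (S : Finset (Fin m)) (k : ℕ) (P : List (Fin m → A)) :
    List (Fin m → A) :=
  P.flatMap fun f =>
    (permsOn S).flatMap fun π =>
      List.replicate (k * Nat.factorial m / Nat.factorial S.card) (f ∘ π.symm)


-- Concrete setup for STATEMENT 12: alternatives `A = Fin 4` with `a = 0`, `b = 1`,
-- `c = 2`, `d = 3`; rankings are given as (alternative ↦ position) bijections.

/-- a ≻ b ≻ c ≻ d -/
def rABCD : Ranking (Fin 4) 4 := Equiv.ofBijective ![0, 1, 2, 3] (by decide)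
/-- d ≻ c ≻ a ≻ b -/
def rDCAB : Ranking (Fin 4) 4 := Equiv.ofBijective ![2, 3, 1, 0] (by decide)
/-- b ≻ a ≻ c ≻ d -/
def rBACD : Ranking (Fin 4) 4 := Equiv.ofBijective ![1, 0, 2, 3] (by decide)
/-- c ≻ a ≻ b ≻ d -/
def rCABD : Ranking (Fin 4) 4 := Equiv.ofBijective ![1, 2, 0, 3] (by decide)
/-- d ≻ b ≻ a ≻ c -/
def rDBAC : Ranking (Fin 4) 4 := Equiv.ofBijective ![2, 1, 3, 0] (by decide)
/-- d ≻ c ≻ b ≻ a -/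
def rDCBA : Ranking (Fin 4) 4 := Equiv.ofBijective ![3, 2, 1, 0] (by decide)

/-- The candidate set `F = {f_p, f_v}`. -/
def Fpv : Set (ScoreVec 4) := {pluralityVec 4 (by norm_num), vetoVec 4 (by norm_num)}

/-- `σ`: k voters a≻b≻c≻d, 2k voters d≻c≻a≻b, k voters b≻a≻c≻d, 3k voters c≻a≻b≻d,
3k voters d≻b≻a≻c. -/
def sigmaEx (k : ℕ) : Profile (Fin 4) 4 :=
  List.replicate k rABCD ++ List.replicate k rDCAB ++ List.replicate k rDCAB ++
  List.replicate k rBACD ++ List.replicate (3 * k) rCABD ++ List.replicate (3 * k) rDBAC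

/-- `σ'`: obtained from `σ` by the k voters ranking a≻b≻c≻d and k of the voters ranking
d≻c≻a≻b each raising `b` by one position. -/
def sigmaEx' (k : ℕ) : Profile (Fin 4) 4 :=
  List.replicate k rBACD ++ List.replicate k rDCBA ++ List.replicate k rDCAB ++
  List.replicate k rBACD ++ List.replicate (3 * k) rCABD ++ List.replicate (3 * k) rDBAC

/-! ### Auxiliary lemmas for the proof -/

section AuxBasic

lemma WeakRanking.ext' {A : Type*} {w1 w2 : WeakRanking A} (h : w1.ge = w2.ge) :
    w1 = w2 := by
  cases w1; cases w2; cases h; rfl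

lemma ScoreVec.s_nonneg {m : ℕ} (sv : ScoreVec m) (h : 0 < m) (i : Fin m) :
    0 ≤ sv.s i := by
  rw [← sv.last h]
  exact sv.anti (by simp only [Fin.le_def]; omega)

lemma ScoreVec.s_le_one {m : ℕ} (sv : ScoreVec m) (h : 0 < m) (i : Fin m) :
    sv.s i ≤ 1 := by
  rw [← sv.first h]
  exact sv.anti (by simp only [Fin.le_def]; omega)

lemma list_sum_map_get {α β : Type*} [AddCommMonoid β] (l : List α) (g : α → β) :
    (l.map g).sum = ∑ i : Fin l.length, g (l.get i) := by
  induction l with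
  | nil => simp
  | cons a l ih =>
    simp only [List.map_cons, List.sum_cons, List.length_cons, Fin.sum_univ_succ, ih]
    rfl

lemma filter_map_sum {α β : Type*} [AddCommMonoid β] (l : List α) (p : α → Bool)
    (g : α → β) :
    ((l.filter p).map g).sum = (l.map fun a => if p a then g a else 0).sum := by
  induction l with
  | nil => simp
  | cons a l ih => by_cases h : p a <;> simp [List.filter_cons, h, ih]

lemma totalScore_eq_sum {A : Type*} {m : ℕ} (sv : ScoreVec m) (σ : Profile A m)
    (x : A) : totalScore sv σ x = ∑ i : Fin σ.length, sv.s (σ.get i x) :=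
  list_sum_map_get σ _

lemma totalScore_subProfile {A : Type*} {m : ℕ} (sv : ScoreVec m) (σ : Profile A m)
    (β : Fin σ.length → Bool) (b : Bool) (x : A) :
    totalScore sv (subProfile σ β b) x
      = ∑ i : Fin σ.length, if β i = b then sv.s (σ.get i x) else 0 := by
  unfold subProfile totalScore
  rw [List.map_map, filter_map_sum, Fin.sum_univ_def]
  congr 1
  apply List.map_congr_left
  intro i _
  simp

lemma subProfile_ne_nil {A : Type*} {m : ℕ} (σ : Profile A m)
    (β : Fin σ.length → Bool) (b : Bool) (i : Fin σ.length) (h : β i = b) :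
    subProfile σ β b ≠ [] := by
  unfold subProfile
  simp only [ne_eq, List.map_eq_nil_iff, List.filter_eq_nil_iff, not_forall]
  exact ⟨i, List.mem_finRange i, by simp [h]⟩

end AuxBasic

section AuxProb

variable {n : ℕ}

/-- Flip the `j`-th bit. -/
def flipA (j : Fin n) : (Fin n → Bool) ≃ (Fin n → Bool) where
  toFun β := Function.update β j (!β j)
  invFun β := Function.update β j (!β j)
  left_inv β := by
    funext i
    by_cases h : i = j
    · subst h; simp
    · simp [Function.update_of_ne h]
  right_inv β := by
    funext i
    by_cases h : i = j
    · subst h; simp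
    · simp [Function.update_of_ne h]

/-- The half-sum `S(β) = ∑_{i : β i} c i`. -/
def Sg (c : Fin n → ℝ) (β : Fin n → Bool) : ℝ := ∑ i, if β i then c i else 0

/-- Signs `X_i(β) ∈ {±1}`. -/
def Xr (β : Fin n → Bool) (i : Fin n) : ℝ := if β i then 1 else -1

lemma Xr_flip_same (j : Fin n) (β : Fin n → Bool) :
    Xr (flipA j β) j = - Xr β j := by
  simp only [Xr, flipA, Equiv.coe_fn_mk, Function.update_self]
  cases h : β j <;> simp

lemma Xr_flip_ne (j i : Fin n) (β : Fin n → Bool) (h : i ≠ j) :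
    Xr (flipA j β) i = Xr β i := by
  simp [Xr, flipA, Function.update_of_ne h]

lemma sum_Xr_mul (i j : Fin n) (hij : i ≠ j) :
    ∑ β : Fin n → Bool, Xr β i * Xr β j = 0 := by
  have h := Equiv.sum_comp (flipA j) (fun β => Xr β i * Xr β j)
  have h2 : ∀ β : Fin n → Bool, Xr (flipA j β) i * Xr (flipA j β) j
      = -(Xr β i * Xr β j) := by
    intro β
    rw [Xr_flip_same, Xr_flip_ne j i β hij]
    ring
  rw [Finset.sum_congr rfl (fun β _ => h2 β)] at h
  rw [Finset.sum_neg_distrib] at h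
  linarith

lemma card_bool_fun : Fintype.card (Fin n → Bool) = 2 ^ n := by
  simp

lemma sum_sq_Xr (c : Fin n → ℝ) :
    ∑ β : Fin n → Bool, (∑ i, c i * Xr β i) ^ 2 = 2 ^ n * ∑ i, (c i) ^ 2 := by
  have expand : ∀ β : Fin n → Bool, (∑ i, c i * Xr β i) ^ 2
      = ∑ i, ∑ j, (c i * c j) * (Xr β i * Xr β j) := by
    intro β
    rw [sq, Finset.sum_mul_sum]
    apply Finset.sum_congr rfl; intro i _
    apply Finset.sum_congr rfl; intro j _
    ring
  rw [Finset.sum_congr rfl fun β _ => expand β]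
  rw [Finset.sum_comm]
  have swap : ∀ i : Fin n, ∑ β : Fin n → Bool, ∑ j, (c i * c j) * (Xr β i * Xr β j)
      = 2 ^ n * (c i) ^ 2 := by
    intro i
    rw [Finset.sum_comm]
    rw [Finset.sum_eq_single i]
    · have hXsq : ∀ β : Fin n → Bool, Xr β i * Xr β i = 1 := by
        intro β; simp only [Xr]; cases h : β i <;> norm_num
      have : ∀ β : Fin n → Bool, (c i * c i) * (Xr β i * Xr β i) = (c i) ^ 2 := by
        intro β; rw [hXsq β]; ring
      rw [Finset.sum_congr rfl fun β _ => this β]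
      rw [Finset.sum_const, Finset.card_univ, card_bool_fun, nsmul_eq_mul]
      push_cast; ring
    · intro j _ hji
      rw [← Finset.mul_sum, sum_Xr_mul i j (Ne.symm hji), mul_zero]
    · intro h; exact absurd (Finset.mem_univ i) h
  rw [Finset.sum_congr rfl fun i _ => swap i]
  rw [← Finset.mul_sum]

lemma two_Sg_sub (c : Fin n → ℝ) (β : Fin n → Bool) :
    ∑ i, c i * Xr β i = 2 * Sg c β - ∑ i, c i := by
  unfold Sg
  rw [Finset.mul_sum, ← Finset.sum_sub_distrib]
  apply Finset.sum_congr rfl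
  intro i _
  simp only [Xr]
  cases h : β i <;> simp <;> ring

/-- Chebyshev-style count of "bad" splits. -/
lemma badcount (c : Fin n → ℝ) (hΔ : 0 < ∑ i, c i) :
    ((Finset.univ.filter fun β : Fin n → Bool =>
        ¬(0 < Sg c β ∧ 0 < (∑ i, c i) - Sg c β)).card : ℝ) * (∑ i, c i) ^ 2
      ≤ 2 ^ n * ∑ i, (c i) ^ 2 := by
  set Δ := ∑ i, c i with hΔdef
  have key : ∀ β ∈ Finset.univ.filter fun β : Fin n → Bool =>
      ¬(0 < Sg c β ∧ 0 < Δ - Sg c β), Δ ^ 2 ≤ (∑ i, c i * Xr β i) ^ 2 := by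
    intro β hβ
    rw [two_Sg_sub, ← hΔdef]
    rw [Finset.mem_filter] at hβ
    have hβ2 := hβ.2
    push_neg at hβ2
    rcases le_or_gt (Sg c β) 0 with h | h
    · nlinarith
    · have := hβ2 h
      nlinarith
  calc ((Finset.univ.filter fun β : Fin n → Bool =>
        ¬(0 < Sg c β ∧ 0 < Δ - Sg c β)).card : ℝ) * Δ ^ 2
      = ∑ _β ∈ Finset.univ.filter fun β : Fin n → Bool =>
          ¬(0 < Sg c β ∧ 0 < Δ - Sg c β), Δ ^ 2 := by
        rw [Finset.sum_const, nsmul_eq_mul]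
    _ ≤ ∑ β ∈ Finset.univ.filter fun β : Fin n → Bool =>
          ¬(0 < Sg c β ∧ 0 < Δ - Sg c β), (∑ i, c i * Xr β i) ^ 2 :=
        Finset.sum_le_sum key
    _ ≤ ∑ β : Fin n → Bool, (∑ i, c i * Xr β i) ^ 2 := by
        apply Finset.sum_le_sum_of_subset_of_nonneg (Finset.filter_subset _ _)
        intro β _ _
        positivity
    _ = 2 ^ n * ∑ i, (c i) ^ 2 := sum_sq_Xr c

lemma Sg_flip (c : Fin n → ℝ) (j : Fin n) (β : Fin n → Bool) :
    Sg c (flipA j β) = Sg c β + (if β j then -(c j) else c j) := by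
  unfold Sg
  rw [← Finset.sum_erase_add _ _ (Finset.mem_univ j),
      ← Finset.sum_erase_add _ (fun i => if β i then c i else 0) (Finset.mem_univ j)]
  have h1 : ∑ i ∈ Finset.univ.erase j, (if (flipA j β) i then c i else 0)
      = ∑ i ∈ Finset.univ.erase j, (if β i then c i else 0) := by
    apply Finset.sum_congr rfl
    intro i hi
    rw [Finset.mem_erase] at hi
    simp [flipA, Function.update_of_ne hi.1]
  rw [h1]
  have h2 : (if (flipA j β) j then c j else 0)
      = (if β j then c j else 0) + (if β j then -(c j) else c j) := by
    simp only [flipA, Equiv.coe_fn_mk, Function.update_self]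
    cases h : β j <;> simp
  rw [h2]; ring

/-- At least half the splits have `Sg ≠ 0` when the total is `0` and some `c i ≠ 0`. -/
lemma flipcount (c : Fin n → ℝ) (i0 : Fin n) (hc : c i0 ≠ 0) :
    (2 : ℝ) ^ n / 2 ≤ ((Finset.univ.filter fun β : Fin n → Bool =>
        Sg c β ≠ 0).card : ℝ) := by
  have hinj : ∀ β ∈ Finset.univ.filter fun β : Fin n → Bool => Sg c β = 0,
      flipA i0 β ∈ Finset.univ.filter fun β : Fin n → Bool => Sg c β ≠ 0 := by
    intro β hβ
    rw [Finset.mem_filter] at hβ ⊢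
    refine ⟨Finset.mem_univ _, ?_⟩
    rw [Sg_flip, hβ.2, zero_add]
    cases h : β i0 <;> simpa using hc
  have hcard : (Finset.univ.filter fun β : Fin n → Bool => Sg c β = 0).card
      ≤ (Finset.univ.filter fun β : Fin n → Bool => Sg c β ≠ 0).card := by
    apply Finset.card_le_card_of_injOn (flipA i0) hinj
    intro β1 _ β2 _ h
    exact (flipA i0).injective h
  have hsplit := Finset.card_filter_add_card_filter_not
    (s := (Finset.univ : Finset (Fin n → Bool)))
    (p := fun β => Sg c β = 0)
  rw [Finset.card_univ, card_bool_fun] at hsplit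
  have : 2 ^ n ≤ 2 * (Finset.univ.filter fun β : Fin n → Bool => Sg c β ≠ 0).card := by
    have heq : (Finset.univ.filter fun a : Fin n → Bool => ¬Sg c a = 0)
        = (Finset.univ.filter fun β : Fin n → Bool => Sg c β ≠ 0) := by
      ext β
      simp [Finset.mem_filter]
    rw [heq] at hsplit
    omega
  have h2 : ((2 : ℝ)) ^ n ≤ 2 * ((Finset.univ.filter fun β : Fin n → Bool =>
      Sg c β ≠ 0).card : ℝ) := by
    exact_mod_cast this
  linarith

end AuxProb

section AuxKT

variable {A : Type*} [Fintype A]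

/-- The contribution of an ordered pair to `KT`. -/
def ktPair (r1 r2 : WeakRanking A) (x y : A) : ℝ :=
  (if (r1.strict x y ∧ r2.strict y x) ∨ (r1.strict y x ∧ r2.strict x y)
      then (1 : ℝ) else 0)
    + (if r1.tied x y ∨ r2.tied x y then (1 : ℝ) else 0) / 2

lemma KT_eq_sum_ktPair (r1 r2 : WeakRanking A) :
    KT r1 r2 = (∑ p ∈ Finset.univ.offDiag, ktPair r1 r2 p.1 p.2) / 2 := rfl

lemma ktPair_nonneg (r1 r2 : WeakRanking A) (x y : A) : 0 ≤ ktPair r1 r2 x y := by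
  unfold ktPair
  have h1 : (0:ℝ) ≤ (if (r1.strict x y ∧ r2.strict y x) ∨ (r1.strict y x ∧ r2.strict x y)
      then (1 : ℝ) else 0) := by split <;> norm_num
  have h2 : (0:ℝ) ≤ (if r1.tied x y ∨ r2.tied x y then (1 : ℝ) else 0) := by
    split <;> norm_num
  linarith

lemma ktPair_le (r1 r2 : WeakRanking A) (x y : A) : ktPair r1 r2 x y ≤ 3 / 2 := by
  unfold ktPair
  have h1 : (if (r1.strict x y ∧ r2.strict y x) ∨ (r1.strict y x ∧ r2.strict x y)
      then (1 : ℝ) else 0) ≤ 1 := by split <;> norm_num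
  have h2 : (if r1.tied x y ∨ r2.tied x y then (1 : ℝ) else 0) ≤ 1 := by
    split <;> norm_num
  linarith

lemma ktPair_symm (r1 r2 : WeakRanking A) (x y : A) :
    ktPair r1 r2 x y = ktPair r1 r2 y x := by
  unfold ktPair
  have hD : ((r1.strict x y ∧ r2.strict y x) ∨ (r1.strict y x ∧ r2.strict x y))
      ↔ ((r1.strict y x ∧ r2.strict x y) ∨ (r1.strict x y ∧ r2.strict y x)) := or_comm
  have hT : (r1.tied x y ∨ r2.tied x y) ↔ (r1.tied y x ∨ r2.tied y x) := by
    unfold WeakRanking.tied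
    constructor <;> (rintro (⟨h1, h2⟩ | ⟨h1, h2⟩)) <;>
      first | exact Or.inl ⟨h2, h1⟩ | exact Or.inr ⟨h2, h1⟩
  rw [if_congr hD rfl rfl, if_congr hT rfl rfl]

lemma WeakRanking.strict_asymm (r : WeakRanking A) {x y : A} (h : r.strict x y) :
    ¬ r.strict y x := fun h' => h.2 h'.1

lemma WeakRanking.strict_not_tied (r : WeakRanking A) {x y : A} (h : r.strict x y) :
    ¬ r.tied x y := fun h' => h.2 h'.2

lemma ktPair_eq_zero {r1 r2 : WeakRanking A} {x y : A}
    (h1 : r1.strict x y) (h2 : r2.strict x y) : ktPair r1 r2 x y = 0 := by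
  unfold ktPair
  rw [if_neg, if_neg]
  · norm_num
  · rintro (h | h)
    · exact r1.strict_not_tied h1 h
    · exact r2.strict_not_tied h2 h
  · rintro (⟨ha, hb⟩ | ⟨ha, hb⟩)
    · exact r2.strict_asymm h2 hb
    · exact r1.strict_asymm h1 ha

lemma one_le_ktPair {r1 r2 : WeakRanking A} {x y : A}
    (h1 : r1.strict x y) (h2 : r2.strict y x) : 1 ≤ ktPair r1 r2 x y := by
  unfold ktPair
  rw [if_pos (Or.inl ⟨h1, h2⟩)]
  have : (0:ℝ) ≤ (if r1.tied x y ∨ r2.tied x y then (1 : ℝ) else 0) := by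
    split <;> norm_num
  linarith

lemma posSWF_strict_iff {m : ℕ} (sv : ScoreVec m) (σ : Profile A m) (x y : A) :
    (posSWF sv σ : WeakRanking A).strict x y ↔ totalScore sv σ y < totalScore sv σ x := by
  constructor
  · rintro ⟨h1, h2⟩
    exact lt_of_le_not_ge h1 h2
  · intro h
    exact ⟨le_of_lt h, not_le_of_gt h⟩

lemma applySplit_of_ne_nil {m : ℕ} (f : SWF A m) {σ : Profile A m} (h : σ ≠ []) :
    applySplit f σ = f σ := if_neg h

lemma totalScore_nil {m : ℕ} (sv : ScoreVec m) (x : A) :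
    totalScore sv ([] : Profile A m) x = 0 := rfl

end AuxKT

section AuxBound

variable {A : Type*} [Fintype A] {m : ℕ}

lemma KT_eq_sum_ktPair' {B : Type*} [Fintype B] [inst : DecidableEq B]
    (r1 r2 : WeakRanking B) :
    KT r1 r2 = (∑ p ∈ Finset.univ.offDiag, ktPair r1 r2 p.1 p.2) / 2 := by
  rw [KT_eq_sum_ktPair]

lemma KT_nonneg (r1 r2 : WeakRanking A) : 0 ≤ KT r1 r2 := by
  rw [KT_eq_sum_ktPair]
  apply div_nonneg _ (by norm_num)
  exact Finset.sum_nonneg fun p _ => ktPair_nonneg r1 r2 p.1 p.2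

lemma one_le_KT {r1 r2 : WeakRanking A} {x y : A} (hxy : x ≠ y)
    (h1 : r1.strict x y) (h2 : r2.strict y x) : 1 ≤ KT r1 r2 := by
  rw [KT_eq_sum_ktPair]
  have hsub : ({(x, y), (y, x)} : Finset (A × A)) ⊆ Finset.univ.offDiag := by
    intro p hp
    rw [Finset.mem_insert, Finset.mem_singleton] at hp
    rcases hp with h | h <;> subst h
    · exact Finset.mem_offDiag.mpr ⟨Finset.mem_univ _, Finset.mem_univ _, hxy⟩
    · exact Finset.mem_offDiag.mpr ⟨Finset.mem_univ _, Finset.mem_univ _, hxy.symm⟩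
  have hpair : ∑ p ∈ ({(x, y), (y, x)} : Finset (A × A)), ktPair r1 r2 p.1 p.2
      = ktPair r1 r2 x y + ktPair r1 r2 y x := by
    rw [Finset.sum_pair (by simp [hxy])]
  have hle : ∑ p ∈ ({(x, y), (y, x)} : Finset (A × A)), ktPair r1 r2 p.1 p.2
      ≤ ∑ p ∈ Finset.univ.offDiag, ktPair r1 r2 p.1 p.2 :=
    Finset.sum_le_sum_of_subset_of_nonneg hsub fun p _ _ => ktPair_nonneg r1 r2 p.1 p.2
  have h1' : 1 ≤ ktPair r1 r2 x y := one_le_ktPair h1 h2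
  have h2' : 1 ≤ ktPair r1 r2 y x := by rw [ktPair_symm]; exact h1'
  linarith

lemma sideDiff_true (sv : ScoreVec m) (σ : Profile A m) (β : Fin σ.length → Bool)
    (x y : A) :
    totalScore sv (subProfile σ β true) x - totalScore sv (subProfile σ β true) y
      = Sg (fun i => sv.s (σ.get i x) - sv.s (σ.get i y)) β := by
  rw [totalScore_subProfile, totalScore_subProfile]
  unfold Sg
  rw [← Finset.sum_sub_distrib]
  apply Finset.sum_congr rfl
  intro i _
  cases h : β i <;> simp [h]

lemma totalDiff_eq (sv : ScoreVec m) (σ : Profile A m) (x y : A) :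
    totalScore sv σ x - totalScore sv σ y
      = ∑ i, (fun i => sv.s (σ.get i x) - sv.s (σ.get i y)) i := by
  rw [totalScore_eq_sum, totalScore_eq_sum, ← Finset.sum_sub_distrib]

lemma sideDiff_false (sv : ScoreVec m) (σ : Profile A m) (β : Fin σ.length → Bool)
    (x y : A) :
    totalScore sv (subProfile σ β false) x - totalScore sv (subProfile σ β false) y
      = (totalScore sv σ x - totalScore sv σ y)
        - Sg (fun i => sv.s (σ.get i x) - sv.s (σ.get i y)) β := by
  rw [totalScore_subProfile, totalScore_subProfile, totalDiff_eq]
  unfold Sg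
  rw [← Finset.sum_sub_distrib, ← Finset.sum_sub_distrib]
  apply Finset.sum_congr rfl
  intro i _
  cases h : β i <;> simp [h]

/-- Oriented per-pair upper bound on the sum of pair contributions. -/
lemma pair_sum_le (hm : 0 < m) (sv : ScoreVec m) (σ : Profile A m) (x y : A) {δ : ℝ}
    (hδ : 0 < δ) (hgap : δ ≤ totalScore sv σ x - totalScore sv σ y) :
    ∑ β : Fin σ.length → Bool,
      ktPair (applySplit (posSWF sv) (subProfile σ β true))
             (applySplit (posSWF sv) (subProfile σ β false)) x y
      ≤ (3 / 2) * (2 ^ σ.length * σ.length) / δ ^ 2 := by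
  set n := σ.length with hn
  set c : Fin n → ℝ := fun i => sv.s (σ.get i x) - sv.s (σ.get i y) with hc
  have hΔ : (∑ i, c i) = totalScore sv σ x - totalScore sv σ y :=
    (totalDiff_eq sv σ x y).symm
  have hΔpos : 0 < ∑ i, c i := by rw [hΔ]; linarith
  have hpt : ∀ β : Fin n → Bool,
      ktPair (applySplit (posSWF sv) (subProfile σ β true))
             (applySplit (posSWF sv) (subProfile σ β false)) x y
      ≤ (3 / 2) * (if ¬(0 < Sg c β ∧ 0 < (∑ i, c i) - Sg c β) then 1 else 0) := by
    intro β
    by_cases hgood : 0 < Sg c β ∧ 0 < (∑ i, c i) - Sg c β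
    · rw [if_neg (not_not_intro hgood), mul_zero]
      have hd1 := sideDiff_true sv σ β x y
      have hd2 := sideDiff_false sv σ β x y
      rw [← hΔ] at hd2
      have hne1 : subProfile σ β true ≠ [] := by
        intro hnil
        rw [hnil, totalScore_nil, totalScore_nil] at hd1
        have : Sg c β = 0 := by linarith
        linarith [hgood.1]
      have hne2 : subProfile σ β false ≠ [] := by
        intro hnil
        rw [hnil, totalScore_nil, totalScore_nil] at hd2
        have : (∑ i, c i) - Sg c β = 0 := by linarith
        linarith [hgood.2]
      rw [applySplit_of_ne_nil _ hne1, applySplit_of_ne_nil _ hne2]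
      have hs1 : (posSWF sv (subProfile σ β true) : WeakRanking A).strict x y := by
        rw [posSWF_strict_iff]
        have := hgood.1
        linarith
      have hs2 : (posSWF sv (subProfile σ β false) : WeakRanking A).strict x y := by
        rw [posSWF_strict_iff]
        have := hgood.2
        linarith
      exact le_of_eq (ktPair_eq_zero hs1 hs2)
    · rw [if_pos hgood, mul_one]
      exact ktPair_le _ _ x y
  have hsum1 : ∑ β : Fin n → Bool,
      ktPair (applySplit (posSWF sv) (subProfile σ β true))
             (applySplit (posSWF sv) (subProfile σ β false)) x y
      ≤ (3 / 2) * ((Finset.univ.filter fun β : Fin n → Bool =>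
          ¬(0 < Sg c β ∧ 0 < (∑ i, c i) - Sg c β)).card : ℝ) := by
    calc ∑ β : Fin n → Bool,
        ktPair (applySplit (posSWF sv) (subProfile σ β true))
               (applySplit (posSWF sv) (subProfile σ β false)) x y
        ≤ ∑ β : Fin n → Bool, (3 / 2) *
            (if ¬(0 < Sg c β ∧ 0 < (∑ i, c i) - Sg c β) then (1:ℝ) else 0) :=
          Finset.sum_le_sum fun β _ => hpt β
      _ = (3 / 2) * ((Finset.univ.filter fun β : Fin n → Bool =>
            ¬(0 < Sg c β ∧ 0 < (∑ i, c i) - Sg c β)).card : ℝ) := by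
          rw [← Finset.mul_sum, Finset.sum_boole]
  have hcsq : ∑ i, (c i) ^ 2 ≤ (n : ℝ) := by
    have h1 : ∀ i : Fin n, (c i) ^ 2 ≤ 1 := by
      intro i
      have ha := sv.s_nonneg hm (σ.get i x)
      have hb := sv.s_le_one hm (σ.get i x)
      have hc' := sv.s_nonneg hm (σ.get i y)
      have hd := sv.s_le_one hm (σ.get i y)
      have : c i = sv.s (σ.get i x) - sv.s (σ.get i y) := rfl
      nlinarith
    calc ∑ i, (c i) ^ 2 ≤ ∑ _i : Fin n, (1 : ℝ) := Finset.sum_le_sum fun i _ => h1 i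
      _ = (n : ℝ) := by simp
  have hbad := badcount c hΔpos
  have hδ2 : δ ^ 2 ≤ (∑ i, c i) ^ 2 := by nlinarith
  have hcard : ((Finset.univ.filter fun β : Fin n → Bool =>
      ¬(0 < Sg c β ∧ 0 < (∑ i, c i) - Sg c β)).card : ℝ)
      ≤ (2 ^ n * n) / δ ^ 2 := by
    rw [le_div_iff₀ (by positivity)]
    have hcn : (0:ℝ) ≤ ((Finset.univ.filter fun β : Fin n → Bool =>
        ¬(0 < Sg c β ∧ 0 < (∑ i, c i) - Sg c β)).card : ℝ) := by positivity
    nlinarith [pow_pos (show (0:ℝ) < 2 by norm_num) n]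
  rw [mul_div_assoc]
  calc ∑ β : Fin n → Bool,
      ktPair (applySplit (posSWF sv) (subProfile σ β true))
             (applySplit (posSWF sv) (subProfile σ β false)) x y
      ≤ (3 / 2) * ((Finset.univ.filter fun β : Fin n → Bool =>
          ¬(0 < Sg c β ∧ 0 < (∑ i, c i) - Sg c β)).card : ℝ) := hsum1
    _ ≤ (3 / 2) * ((2 ^ n * n) / δ ^ 2) := by linarith
 
/-- Per-profile lower bound when two alternatives are exactly tied overall. -/
lemma half_le_expDisagree (sv : ScoreVec m) (σ : Profile A m) (x y : A) (hxy : x ≠ y)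
    (heq : totalScore sv σ x = totalScore sv σ y)
    (i0 : Fin σ.length) (hc0 : sv.s (σ.get i0 x) ≠ sv.s (σ.get i0 y)) :
    1 / 2 ≤ expDisagree (posSWF sv) σ := by
  set c : Fin σ.length → ℝ := fun i => sv.s (σ.get i x) - sv.s (σ.get i y) with hc
  have hΔ' : totalScore sv σ x - totalScore sv σ y = 0 := by rw [heq, sub_self]
  have hpt : ∀ β : Fin σ.length → Bool,
      (if Sg c β ≠ 0 then (1:ℝ) else 0)
      ≤ KT (applySplit (posSWF sv) (subProfile σ β true))
           (applySplit (posSWF sv) (subProfile σ β false)) := by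
    intro β
    by_cases h : Sg c β = 0
    · rw [if_neg (not_not_intro h)]
      exact KT_nonneg _ _
    · rw [if_pos h]
      have hd1 := sideDiff_true sv σ β x y
      have hd2 := sideDiff_false sv σ β x y
      rw [hΔ'] at hd2
      have hne1 : subProfile σ β true ≠ [] := by
        intro hnil
        rw [hnil, totalScore_nil, totalScore_nil] at hd1
        apply h
        linarith
      have hne2 : subProfile σ β false ≠ [] := by
        intro hnil
        rw [hnil, totalScore_nil, totalScore_nil] at hd2
        apply h
        linarith
      rw [applySplit_of_ne_nil _ hne1, applySplit_of_ne_nil _ hne2]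
      rcases lt_or_gt_of_ne h with hlt | hgt
      · refine one_le_KT hxy.symm ?_ ?_
        · rw [posSWF_strict_iff]; linarith
        · rw [posSWF_strict_iff]; linarith
      · refine one_le_KT hxy ?_ ?_
        · rw [posSWF_strict_iff]; linarith
        · rw [posSWF_strict_iff]; linarith
  have hsum : ∑ β : Fin σ.length → Bool, (if Sg c β ≠ 0 then (1:ℝ) else 0)
      ≤ ∑ β : Fin σ.length → Bool,
          KT (applySplit (posSWF sv) (subProfile σ β true))
             (applySplit (posSWF sv) (subProfile σ β false)) :=
    Finset.sum_le_sum fun β _ => hpt β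
  have hc0' : c i0 ≠ 0 := sub_ne_zero_of_ne hc0
  have hflip := flipcount c i0 hc0'
  rw [Finset.sum_boole] at hsum
  unfold expDisagree
  rw [le_div_iff₀ (by positivity)]
  linarith

/-- Main upper bound on expected disagreement when all score gaps are at least `δ`. -/
lemma expDisagree_le_of_gaps (sv : ScoreVec 4) (σ : Profile (Fin 4) 4) {δ : ℝ}
    (hδ : 0 < δ)
    (hgap : ∀ x y : Fin 4, x ≠ y → δ ≤ |totalScore sv σ x - totalScore sv σ y|) :
    expDisagree (posSWF sv) σ ≤ 9 * σ.length / δ ^ 2 := by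
  set n := σ.length with hn
  have hswap : ∑ β : Fin n → Bool,
      KT (applySplit (posSWF sv) (subProfile σ β true))
         (applySplit (posSWF sv) (subProfile σ β false))
      = (∑ p ∈ Finset.univ.offDiag, ∑ β : Fin n → Bool,
          ktPair (applySplit (posSWF sv) (subProfile σ β true))
                 (applySplit (posSWF sv) (subProfile σ β false)) p.1 p.2) / 2 := by
    calc ∑ β : Fin n → Bool,
        KT (applySplit (posSWF sv) (subProfile σ β true))
           (applySplit (posSWF sv) (subProfile σ β false))
        = ∑ β : Fin n → Bool, (∑ p ∈ Finset.univ.offDiag,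
            ktPair (applySplit (posSWF sv) (subProfile σ β true))
                   (applySplit (posSWF sv) (subProfile σ β false)) p.1 p.2) / 2 :=
          Finset.sum_congr rfl fun β _ => KT_eq_sum_ktPair' _ _
      _ = (∑ β : Fin n → Bool, ∑ p ∈ Finset.univ.offDiag,
            ktPair (applySplit (posSWF sv) (subProfile σ β true))
                   (applySplit (posSWF sv) (subProfile σ β false)) p.1 p.2) / 2 :=
          (Finset.sum_div _ _ _).symm
      _ = _ := by rw [Finset.sum_comm]
  have hbound : ∀ p ∈ (Finset.univ.offDiag : Finset (Fin 4 × Fin 4)),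
      ∑ β : Fin n → Bool,
        ktPair (applySplit (posSWF sv) (subProfile σ β true))
               (applySplit (posSWF sv) (subProfile σ β false)) p.1 p.2
      ≤ (3 / 2) * (2 ^ n * n) / δ ^ 2 := by
    intro p hp
    obtain ⟨-, -, hne⟩ := Finset.mem_offDiag.mp hp
    have hgp := hgap p.1 p.2 hne
    rcases abs_cases (totalScore sv σ p.1 - totalScore sv σ p.2) with
      ⟨habs, _⟩ | ⟨habs, _⟩
    · exact pair_sum_le (by norm_num) sv σ p.1 p.2 hδ (by linarith)
    · have hle := pair_sum_le (by norm_num) sv σ p.2 p.1 hδ (by linarith)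
      calc ∑ β : Fin n → Bool,
          ktPair (applySplit (posSWF sv) (subProfile σ β true))
                 (applySplit (posSWF sv) (subProfile σ β false)) p.1 p.2
          = ∑ β : Fin n → Bool,
            ktPair (applySplit (posSWF sv) (subProfile σ β true))
                   (applySplit (posSWF sv) (subProfile σ β false)) p.2 p.1 :=
            Finset.sum_congr rfl fun β _ => ktPair_symm _ _ _ _
        _ ≤ _ := hle
  have hcard : ((Finset.univ.offDiag : Finset (Fin 4 × Fin 4))).card = 12 := by
    rw [Finset.offDiag_card]
    simp
  have hsum : ∑ p ∈ (Finset.univ.offDiag : Finset (Fin 4 × Fin 4)),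
      ∑ β : Fin n → Bool,
        ktPair (applySplit (posSWF sv) (subProfile σ β true))
               (applySplit (posSWF sv) (subProfile σ β false)) p.1 p.2
      ≤ 12 * ((3 / 2) * (2 ^ n * n) / δ ^ 2) := by
    calc ∑ p ∈ (Finset.univ.offDiag : Finset (Fin 4 × Fin 4)),
        ∑ β : Fin n → Bool,
          ktPair (applySplit (posSWF sv) (subProfile σ β true))
                 (applySplit (posSWF sv) (subProfile σ β false)) p.1 p.2
        ≤ ∑ _p ∈ (Finset.univ.offDiag : Finset (Fin 4 × Fin 4)),
            (3 / 2) * (2 ^ n * n) / δ ^ 2 := Finset.sum_le_sum hbound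
      _ = 12 * ((3 / 2) * (2 ^ n * n) / δ ^ 2) := by
          rw [Finset.sum_const, hcard, nsmul_eq_mul]
          push_cast
          ring
  unfold expDisagree
  have h2n : (0:ℝ) < (2:ℝ) ^ n := by positivity
  show (∑ β : Fin n → Bool,
      KT (applySplit (posSWF sv) (subProfile σ β true))
         (applySplit (posSWF sv) (subProfile σ β false))) / 2 ^ n ≤ 9 * n / δ ^ 2
  rw [hswap, div_div, div_le_iff₀ (by positivity)]
  calc ∑ p ∈ (Finset.univ.offDiag : Finset (Fin 4 × Fin 4)),
      ∑ β : Fin n → Bool,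
        ktPair (applySplit (posSWF sv) (subProfile σ β true))
               (applySplit (posSWF sv) (subProfile σ β false)) p.1 p.2
      ≤ 12 * ((3 / 2) * (2 ^ n * n) / δ ^ 2) := hsum
    _ = 9 * (n : ℝ) / δ ^ 2 * (2 * 2 ^ n) := by
        field_simp
        ring

end AuxBound

section AuxCompute

lemma totalScore_append' {A : Type*} {m : ℕ} (sv : ScoreVec m) (σ1 σ2 : Profile A m)
    (x : A) : totalScore sv (σ1 ++ σ2) x = totalScore sv σ1 x + totalScore sv σ2 x := by
  unfold totalScore
  rw [List.map_append, List.sum_append]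

lemma totalScore_replicate {A : Type*} {m : ℕ} (sv : ScoreVec m) (k : ℕ)
    (r : Ranking A m) (x : A) :
    totalScore sv (List.replicate k r) x = k * sv.s (r x) := by
  unfold totalScore
  rw [List.map_replicate, List.sum_replicate, nsmul_eq_mul]

lemma totalScore_sigmaEx (sv : ScoreVec 4) (k : ℕ) (x : Fin 4) :
    totalScore sv (sigmaEx k) x
      = k * (sv.s (rABCD x) + 2 * sv.s (rDCAB x) + sv.s (rBACD x)
          + 3 * sv.s (rCABD x) + 3 * sv.s (rDBAC x)) := by
  unfold sigmaEx
  simp only [totalScore_append', totalScore_replicate]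
  push_cast
  ring

lemma totalScore_sigmaEx' (sv : ScoreVec 4) (k : ℕ) (x : Fin 4) :
    totalScore sv (sigmaEx' k) x
      = k * (2 * sv.s (rBACD x) + sv.s (rDCBA x) + sv.s (rDCAB x)
          + 3 * sv.s (rCABD x) + 3 * sv.s (rDBAC x)) := by
  unfold sigmaEx'
  simp only [totalScore_append', totalScore_replicate]
  push_cast
  ring

example : rABCD (0 : Fin 4) = 0 := rfl
example : rDCAB (1 : Fin 4) = 3 := rfl

/-- Veto scores on `sigmaEx`: `a:10k, b:8k, c:7k, d:5k`. -/
lemma veto_score_sigma (k : ℕ) (x : Fin 4) :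
    totalScore (vetoVec 4 (by norm_num)) (sigmaEx k) x
      = k * (![10, 8, 7, 5] x : ℝ) := by
  rw [totalScore_sigmaEx]
  have h3 : ((3 : Fin 4) : ℕ) = 3 := rfl
  have h2 : ((2 : Fin 4) : ℕ) = 2 := rfl
  have h1 : ((1 : Fin 4) : ℕ) = 1 := rfl
  have h0 : ((0 : Fin 4) : ℕ) = 0 := rfl
  fin_cases x <;> norm_num [vetoVec, rABCD, rDCAB, rBACD, rCABD, rDBAC,
    Equiv.ofBijective, h0, h1, h2, h3]

/-- Plurality scores on `sigmaEx`: `a:k, b:k, c:3k, d:5k`. -/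
lemma plur_score_sigma (k : ℕ) (x : Fin 4) :
    totalScore (pluralityVec 4 (by norm_num)) (sigmaEx k) x
      = k * (![1, 1, 3, 5] x : ℝ) := by
  rw [totalScore_sigmaEx]
  have h3 : ((3 : Fin 4) : ℕ) = 3 := rfl
  have h2 : ((2 : Fin 4) : ℕ) = 2 := rfl
  have h1 : ((1 : Fin 4) : ℕ) = 1 := rfl
  have h0 : ((0 : Fin 4) : ℕ) = 0 := rfl
  fin_cases x <;> norm_num [pluralityVec, rABCD, rDCAB, rBACD, rCABD, rDBAC,
    Equiv.ofBijective, h0, h1, h2, h3,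
    show (1 : Fin 4) ≠ 0 from by decide, show (2 : Fin 4) ≠ 0 from by decide,
    show (3 : Fin 4) ≠ 0 from by decide]

/-- Plurality scores on `sigmaEx'`: `a:0, b:2k, c:3k, d:5k`. -/
lemma plur_score_sigma' (k : ℕ) (x : Fin 4) :
    totalScore (pluralityVec 4 (by norm_num)) (sigmaEx' k) x
      = k * (![0, 2, 3, 5] x : ℝ) := by
  rw [totalScore_sigmaEx']
  have h3 : ((3 : Fin 4) : ℕ) = 3 := rfl
  have h2 : ((2 : Fin 4) : ℕ) = 2 := rfl
  have h1 : ((1 : Fin 4) : ℕ) = 1 := rfl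
  have h0 : ((0 : Fin 4) : ℕ) = 0 := rfl
  fin_cases x <;> norm_num [pluralityVec, rBACD, rDCBA, rDCAB, rCABD, rDBAC,
    Equiv.ofBijective, h0, h1, h2, h3,
    show (1 : Fin 4) ≠ 0 from by decide, show (2 : Fin 4) ≠ 0 from by decide,
    show (3 : Fin 4) ≠ 0 from by decide]

/-- Veto scores on `sigmaEx'`: `a:9k, b:9k, c:7k, d:5k`. -/
lemma veto_score_sigma' (k : ℕ) (x : Fin 4) :
    totalScore (vetoVec 4 (by norm_num)) (sigmaEx' k) x
      = k * (![9, 9, 7, 5] x : ℝ) := by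
  rw [totalScore_sigmaEx']
  have h3 : ((3 : Fin 4) : ℕ) = 3 := rfl
  have h2 : ((2 : Fin 4) : ℕ) = 2 := rfl
  have h1 : ((1 : Fin 4) : ℕ) = 1 := rfl
  have h0 : ((0 : Fin 4) : ℕ) = 0 := rfl
  fin_cases x <;> norm_num [vetoVec, rBACD, rDCBA, rDCAB, rCABD, rDBAC,
    Equiv.ofBijective, h0, h1, h2, h3]

lemma sigmaEx_length (k : ℕ) : (sigmaEx k).length = 10 * k := by
  simp [sigmaEx]
  omega

lemma sigmaEx'_length (k : ℕ) : (sigmaEx' k).length = 10 * k := by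
  simp [sigmaEx']
  omega

end AuxCompute

section AuxMono

lemma card_filter_lt_rank {A : Type*} [Fintype A] {m : ℕ} (r : Ranking A m)
    (t : Fin m) : (Finset.univ.filter fun c => r c < t).card = t.val := by
  have heq : (Finset.univ.filter fun c => r c < t)
      = (Finset.Iio t).map r.symm.toEmbedding := by
    ext c
    simp only [Finset.mem_filter, Finset.mem_univ, true_and, Finset.mem_map,
      Finset.mem_Iio, Equiv.toEmbedding_apply]
    constructor
    · intro h
      exact ⟨r c, h, by simp⟩
    · rintro ⟨j, hj, rfl⟩
      simpa using hj
  rw [heq, Finset.card_map, Fin.card_Iio]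

lemma card_filter_split {A : Type*} [Fintype A] (P : A → Prop) [DecidablePred P]
    (a : A) :
    (Finset.univ.filter P).card
      = (Finset.univ.filter fun c => c ≠ a ∧ P c).card + (if P a then 1 else 0) := by
  have hdisj : Disjoint (Finset.univ.filter fun c => c ≠ a ∧ P c)
      (Finset.univ.filter fun c => c = a ∧ P c) := by
    rw [Finset.disjoint_left]
    intro c h1 h2
    simp only [Finset.mem_filter] at h1 h2
    exact h1.2.1 h2.2.1
  have hunion : Finset.univ.filter P
      = (Finset.univ.filter fun c => c ≠ a ∧ P c)
        ∪ (Finset.univ.filter fun c => c = a ∧ P c) := by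
    ext c
    simp only [Finset.mem_filter, Finset.mem_union, Finset.mem_univ, true_and]
    by_cases hc : c = a <;> simp [hc]
  rw [hunion, Finset.card_union_of_disjoint hdisj]
  congr 1
  by_cases hPa : P a
  · rw [if_pos hPa]
    have hsingle : (Finset.univ.filter fun c => c = a ∧ P c) = {a} := by
      ext c
      simp only [Finset.mem_filter, Finset.mem_univ, true_and, Finset.mem_singleton]
      constructor
      · rintro ⟨rfl, -⟩; rfl
      · rintro rfl; exact ⟨rfl, hPa⟩
    rw [hsingle, Finset.card_singleton]
  · rw [if_neg hPa]
    have hempty : (Finset.univ.filter fun c => c = a ∧ P c) = ∅ := by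
      ext c
      simp only [Finset.mem_filter, Finset.mem_univ, true_and,
        Finset.notMem_empty, iff_false]
      rintro ⟨rfl, hP⟩
      exact hPa hP
    rw [hempty, Finset.card_empty]

/-- Raising `a` weakly lowers every other alternative. -/
lemma raises_key {A : Type*} [Fintype A] {m : ℕ} (a b : A) (r r' : Ranking A m)
    (h : RaisesWeak a r r') (hb : b ≠ a) : r b ≤ r' b := by
  obtain ⟨hle, hiff⟩ := h
  have hS : (Finset.univ.filter fun c => c ≠ a ∧ r c < r b)
      = (Finset.univ.filter fun c => c ≠ a ∧ r' c < r' b) := by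
    ext c
    simp only [Finset.mem_filter, Finset.mem_univ, true_and]
    constructor
    · rintro ⟨hca, hlt⟩
      exact ⟨hca, (hiff c b hca hb).mp hlt⟩
    · rintro ⟨hca, hlt⟩
      exact ⟨hca, (hiff c b hca hb).mpr hlt⟩
  have e1 : (r b).val = (Finset.univ.filter fun c => c ≠ a ∧ r c < r b).card
      + (if r a < r b then 1 else 0) := by
    have h1 := card_filter_lt_rank r (r b)
    have h2 := card_filter_split (fun c => r c < r b) a
    rw [h1] at h2
    exact h2
  have e2 : (r' b).val = (Finset.univ.filter fun c => c ≠ a ∧ r' c < r' b).card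
      + (if r' a < r' b then 1 else 0) := by
    have h1 := card_filter_lt_rank r' (r' b)
    have h2 := card_filter_split (fun c => r' c < r' b) a
    rw [h1] at h2
    exact h2
  rw [Fin.le_def, e1, e2, hS]
  by_cases h1 : r a < r b
  · by_cases h2 : r' a < r' b
    · simp [h1, h2]
    · exfalso
      have hne : r' b ≠ r' a := fun hh => hb (r'.injective hh)
      have hlt2 : r' b < r' a := lt_of_le_of_ne (not_lt.mp h2) hne
      have hv1 : (r' b).val < (r' a).val := hlt2
      have hv2 : (r' a).val ≤ (r a).val := hle
      have hv3 : (r a).val < (r b).val := h1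
      have hcards : (r b).val = (r' b).val + 1 := by
        rw [e1, e2, hS]
        simp [h1, h2]
      omega
  · by_cases h2 : r' a < r' b <;> simp [h1, h2]

lemma totalScore_cons {A : Type*} {m : ℕ} (sv : ScoreVec m) (r : Ranking A m)
    (σ : Profile A m) (x : A) :
    totalScore sv (r :: σ) x = sv.s (r x) + totalScore sv σ x := by
  simp [totalScore]

lemma mono_posSWF (sv : ScoreVec 4) : MonotonicSWF (posSWF sv : SWF (Fin 4) 4) := by
  intro a σ σ' h
  have hscore_a : totalScore sv σ a ≤ totalScore sv σ' a := by
    induction h with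
    | nil => exact le_refl _
    | cons h1 h2 ih =>
        rw [totalScore_cons, totalScore_cons]
        exact add_le_add (sv.anti h1.1) ih
  have hscore_b : ∀ b : Fin 4, b ≠ a → totalScore sv σ' b ≤ totalScore sv σ b := by
    intro b hb
    clear hscore_a
    induction h with
    | nil => exact le_refl _
    | cons h1 h2 ih =>
        rw [totalScore_cons, totalScore_cons]
        exact add_le_add (sv.anti (raises_key a b _ _ h1 hb)) ih
  unfold rankIn
  have hsub : (Finset.univ.filter fun b => (posSWF sv σ' : WeakRanking (Fin 4)).strict b a)
      ⊆ Finset.univ.filter fun b => (posSWF sv σ : WeakRanking (Fin 4)).strict b a := by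
    intro b hb
    simp only [Finset.mem_filter] at hb ⊢
    refine ⟨Finset.mem_univ _, ?_⟩
    have hstrict := (posSWF_strict_iff sv σ' b a).mp hb.2
    by_cases hba : b = a
    · subst hba
      exact absurd hstrict (lt_irrefl _)
    · rw [posSWF_strict_iff]
      have h2 := hscore_b b hba
      linarith
  exact Nat.add_le_add_left (Finset.card_le_card hsub) 1

end AuxMono

section AuxAssemble

/-- Wrapper for the lower bound using membership instead of an index. -/
lemma half_le_expDisagree' {A : Type*} [Fintype A] {m : ℕ} (sv : ScoreVec m)
    (σ : Profile A m) (x y : A) (hxy : x ≠ y)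
    (heq : totalScore sv σ x = totalScore sv σ y)
    (hr : ∃ r ∈ σ, sv.s (r x) ≠ sv.s (r y)) :
    1 / 2 ≤ expDisagree (posSWF sv) σ := by
  obtain ⟨r, hrmem, hrne⟩ := hr
  obtain ⟨i0, hi0⟩ := List.mem_iff_get.mp hrmem
  exact half_le_expDisagree sv σ x y hxy heq i0 (by rw [hi0]; exact hrne)

lemma expDisagree_veto_sigma_lt (k : ℕ) (hk : 200 ≤ k) :
    expDisagree (posSWF (vetoVec 4 (by norm_num))) (sigmaEx k)
      < expDisagree (posSWF (pluralityVec 4 (by norm_num))) (sigmaEx k) := by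
  have hk1 : (200:ℝ) ≤ (k:ℝ) := by exact_mod_cast hk
  have hkpos : (0:ℝ) < (k:ℝ) := by linarith
  have hgaps : ∀ x y : Fin 4, x ≠ y →
      (k:ℝ) ≤ |totalScore (vetoVec 4 (by norm_num)) (sigmaEx k) x
        - totalScore (vetoVec 4 (by norm_num)) (sigmaEx k) y| := by
    intro x y hxy
    rw [veto_score_sigma, veto_score_sigma]
    fin_cases x <;> fin_cases y <;>
      first
        | exact (hxy rfl).elim
        | (rw [le_abs]; left; norm_num; nlinarith)
        | (rw [le_abs]; right; norm_num; nlinarith)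
  have hup := expDisagree_le_of_gaps (vetoVec 4 (by norm_num)) (sigmaEx k) hkpos hgaps
  rw [sigmaEx_length] at hup
  have heqab : totalScore (pluralityVec 4 (by norm_num)) (sigmaEx k) 0
      = totalScore (pluralityVec 4 (by norm_num)) (sigmaEx k) 1 := by
    rw [plur_score_sigma, plur_score_sigma]
    norm_num
  have hmem : ∃ r ∈ sigmaEx k, (pluralityVec 4 (by norm_num)).s (r 0)
      ≠ (pluralityVec 4 (by norm_num)).s (r 1) := by
    refine ⟨rABCD, ?_, ?_⟩
    · unfold sigmaEx
      have hk0 : k ≠ 0 := by omega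
      simp [List.mem_append, List.mem_replicate, hk0]
    · have e0 : rABCD (0 : Fin 4) = 0 := rfl
      have e1 : rABCD (1 : Fin 4) = 1 := rfl
      rw [e0, e1]
      norm_num [pluralityVec, show ((1:Fin 4):ℕ) = 1 from rfl,
        show ((0:Fin 4):ℕ) = 0 from rfl]
  have hlow := half_le_expDisagree' (pluralityVec 4 (by norm_num)) (sigmaEx k) 0 1
    (by decide) heqab hmem
  have hnum : 9 * ((10 * k : ℕ) : ℝ) / (k:ℝ) ^ 2 < 1 / 2 := by
    push_cast
    rw [div_lt_iff₀ (by positivity)]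
    nlinarith
  linarith

lemma expDisagree_plur_sigma'_lt (k : ℕ) (hk : 200 ≤ k) :
    expDisagree (posSWF (pluralityVec 4 (by norm_num))) (sigmaEx' k)
      < expDisagree (posSWF (vetoVec 4 (by norm_num))) (sigmaEx' k) := by
  have hk1 : (200:ℝ) ≤ (k:ℝ) := by exact_mod_cast hk
  have hkpos : (0:ℝ) < (k:ℝ) := by linarith
  have hgaps : ∀ x y : Fin 4, x ≠ y →
      (k:ℝ) ≤ |totalScore (pluralityVec 4 (by norm_num)) (sigmaEx' k) x
        - totalScore (pluralityVec 4 (by norm_num)) (sigmaEx' k) y| := by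
    intro x y hxy
    rw [plur_score_sigma', plur_score_sigma']
    fin_cases x <;> fin_cases y <;>
      first
        | exact (hxy rfl).elim
        | (rw [le_abs]; left; norm_num; nlinarith)
        | (rw [le_abs]; right; norm_num; nlinarith)
  have hup := expDisagree_le_of_gaps (pluralityVec 4 (by norm_num)) (sigmaEx' k)
    hkpos hgaps
  rw [sigmaEx'_length] at hup
  have heqab : totalScore (vetoVec 4 (by norm_num)) (sigmaEx' k) 0
      = totalScore (vetoVec 4 (by norm_num)) (sigmaEx' k) 1 := by
    rw [veto_score_sigma', veto_score_sigma']
    norm_num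
  have hmem : ∃ r ∈ sigmaEx' k, (vetoVec 4 (by norm_num)).s (r 0)
      ≠ (vetoVec 4 (by norm_num)).s (r 1) := by
    refine ⟨rDCBA, ?_, ?_⟩
    · unfold sigmaEx'
      have hk0 : k ≠ 0 := by omega
      simp [List.mem_append, List.mem_replicate, hk0]
    · have e0 : rDCBA (0 : Fin 4) = 3 := rfl
      have e1 : rDCBA (1 : Fin 4) = 2 := rfl
      rw [e0, e1]
      norm_num [vetoVec, show ((3:Fin 4):ℕ) = 3 from rfl, show ((2:Fin 4):ℕ) = 2 from rfl]
  have hlow := half_le_expDisagree' (vetoVec 4 (by norm_num)) (sigmaEx' k) 0 1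
    (by decide) heqab hmem
  have hnum : 9 * ((10 * k : ℕ) : ℝ) / (k:ℝ) ^ 2 < 1 / 2 := by
    push_cast
    rw [div_lt_iff₀ (by positivity)]
    nlinarith
  linarith

lemma plur_ne_veto : pluralityVec 4 (by norm_num) ≠ vetoVec 4 (by norm_num) := by
  intro h
  have := congrArg (fun sv : ScoreVec 4 => sv.s 1) h
  simp only [pluralityVec, vetoVec] at this
  norm_num at this

end AuxAssemble

section AuxFinal

lemma AbCVec_sigma (k : ℕ) (hk : 200 ≤ k) :
    AbCVec Fpv (sigmaEx k) = {vetoVec 4 (by norm_num)} := by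
  have hlt := expDisagree_veto_sigma_lt k hk
  apply Set.eq_of_subset_of_subset
  · intro sv hsv
    obtain ⟨hmem, hmin⟩ := hsv
    simp only [Fpv, Set.mem_insert_iff, Set.mem_singleton_iff] at hmem
    rcases hmem with rfl | rfl
    · exfalso
      have hle := hmin (vetoVec 4 (by norm_num))
        (Set.mem_insert_of_mem _ rfl)
      exact absurd hle (not_le.mpr hlt)
    · exact Set.mem_singleton _
  · intro sv hsv
    rw [Set.mem_singleton_iff] at hsv
    subst hsv
    refine ⟨Set.mem_insert_of_mem _ rfl, ?_⟩
    intro g hg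
    simp only [Fpv, Set.mem_insert_iff, Set.mem_singleton_iff] at hg
    rcases hg with rfl | rfl
    · exact le_of_lt hlt
    · exact le_refl _

lemma AbCVec_sigma' (k : ℕ) (hk : 200 ≤ k) :
    AbCVec Fpv (sigmaEx' k) = {pluralityVec 4 (by norm_num)} := by
  have hlt := expDisagree_plur_sigma'_lt k hk
  apply Set.eq_of_subset_of_subset
  · intro sv hsv
    obtain ⟨hmem, hmin⟩ := hsv
    simp only [Fpv, Set.mem_insert_iff, Set.mem_singleton_iff] at hmem
    rcases hmem with rfl | rfl
    · exact Set.mem_singleton _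
    · exfalso
      have hle := hmin (pluralityVec 4 (by norm_num)) (Set.mem_insert _ _)
      exact absurd hle (not_le.mpr hlt)
  · intro sv hsv
    rw [Set.mem_singleton_iff] at hsv
    subst hsv
    refine ⟨Set.mem_insert _ _, ?_⟩
    intro g hg
    simp only [Fpv, Set.mem_insert_iff, Set.mem_singleton_iff] at hg
    rcases hg with rfl | rfl
    · exact le_refl _
    · exact le_of_lt hlt

lemma induced_eq (σ : Profile (Fin 4) 4) (v : ScoreVec 4) (h : AbCVec Fpv σ = {v}) :
    inducedAbCVec Fpv σ = posSWF v σ := by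
  unfold inducedAbCVec
  have hex : ∃ sv, AbCVec Fpv σ = {sv} := ⟨v, h⟩
  rw [dif_pos hex]
  have hv : hex.choose = v := by
    have hspec := hex.choose_spec
    exact (Set.singleton_eq_singleton_iff.mp (h.symm.trans hspec)).symm
  exact congrArg (fun sv => posSWF sv σ) hv

lemma posSWF_veto_sigma (k : ℕ) (hk : 1 ≤ k) :
    posSWF (vetoVec 4 (by norm_num)) (sigmaEx k) = Ranking.toWeak rABCD := by
  have hk' : (1:ℝ) ≤ (k:ℝ) := by exact_mod_cast hk
  apply WeakRanking.ext'
  funext x y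
  show (totalScore (vetoVec 4 (by norm_num)) (sigmaEx k) y
      ≤ totalScore (vetoVec 4 (by norm_num)) (sigmaEx k) x) = (rABCD x ≤ rABCD y)
  rw [veto_score_sigma, veto_score_sigma]
  apply propext
  fin_cases x <;> fin_cases y <;>
    norm_num [show rABCD (0:Fin 4) = 0 from rfl, show rABCD (1:Fin 4) = 1 from rfl,
      show rABCD (2:Fin 4) = 2 from rfl, show rABCD (3:Fin 4) = 3 from rfl] <;>
    first
      | exact iff_of_true (by nlinarith) (by decide)
      | exact iff_of_false (fun hcon => by nlinarith) (by decide)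
      | nlinarith
      | decide
      | (intro hcon; nlinarith)

lemma posSWF_plur_sigma' (k : ℕ) (hk : 1 ≤ k) :
    posSWF (pluralityVec 4 (by norm_num)) (sigmaEx' k) = Ranking.toWeak rDCBA := by
  have hk' : (1:ℝ) ≤ (k:ℝ) := by exact_mod_cast hk
  apply WeakRanking.ext'
  funext x y
  show (totalScore (pluralityVec 4 (by norm_num)) (sigmaEx' k) y
      ≤ totalScore (pluralityVec 4 (by norm_num)) (sigmaEx' k) x) = (rDCBA x ≤ rDCBA y)
  rw [plur_score_sigma', plur_score_sigma']
  apply propext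
  fin_cases x <;> fin_cases y <;>
    norm_num [show rDCBA (0:Fin 4) = 3 from rfl, show rDCBA (1:Fin 4) = 2 from rfl,
      show rDCBA (2:Fin 4) = 1 from rfl, show rDCBA (3:Fin 4) = 0 from rfl] <;>
    first
      | exact iff_of_true (by nlinarith) (by decide)
      | exact iff_of_false (fun hcon => by nlinarith) (by decide)
      | nlinarith
      | decide
      | (intro hcon; nlinarith)

lemma rankIn_rABCD : rankIn (Ranking.toWeak rABCD) 1 = 2 := by
  unfold rankIn
  have hset : (Finset.univ.filter fun b : Fin 4 =>
      (Ranking.toWeak rABCD).strict b 1) = {0} := by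
    ext b
    simp only [Finset.mem_filter, Finset.mem_univ, true_and, Finset.mem_singleton]
    unfold WeakRanking.strict Ranking.toWeak
    fin_cases b <;> simp <;> decide
  rw [hset]
  rfl

lemma rankIn_rDCBA : rankIn (Ranking.toWeak rDCBA) 1 = 3 := by
  unfold rankIn
  have hset : (Finset.univ.filter fun b : Fin 4 =>
      (Ranking.toWeak rDCBA).strict b 1) = {2, 3} := by
    ext b
    simp only [Finset.mem_filter, Finset.mem_univ, true_and, Finset.mem_insert,
      Finset.mem_singleton]
    unfold WeakRanking.strict Ranking.toWeak
    fin_cases b <;> simp <;> decide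
  rw [hset]
  rfl

lemma forall2_replicate {α β : Type*} {R : α → β → Prop} {x : α} {y : β} (h : R x y)
    (k : ℕ) : List.Forall₂ R (List.replicate k x) (List.replicate k y) := by
  induction k with
  | zero => exact List.Forall₂.nil
  | succ n ih => exact List.Forall₂.cons h ih

lemma forall2_sigma (k : ℕ) :
    List.Forall₂ (RaisesWeak (1 : Fin 4)) (sigmaEx k) (sigmaEx' k) := by
  unfold sigmaEx sigmaEx'
  have h1 : RaisesWeak (1 : Fin 4) rABCD rBACD := ⟨by decide, by decide⟩
  have h2 : RaisesWeak (1 : Fin 4) rDCAB rDCBA := ⟨by decide, by decide⟩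
  have h3 : RaisesWeak (1 : Fin 4) rDCAB rDCAB := ⟨by decide, by decide⟩
  have h4 : RaisesWeak (1 : Fin 4) rBACD rBACD := ⟨by decide, by decide⟩
  have h5 : RaisesWeak (1 : Fin 4) rCABD rCABD := ⟨by decide, by decide⟩
  have h6 : RaisesWeak (1 : Fin 4) rDBAC rDBAC := ⟨by decide, by decide⟩
  exact List.rel_append (List.rel_append (List.rel_append (List.rel_append
    (List.rel_append (forall2_replicate h1 k) (forall2_replicate h2 k))
    (forall2_replicate h3 k)) (forall2_replicate h4 k))
    (forall2_replicate h5 (3 * k))) (forall2_replicate h6 (3 * k))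

end AuxFinal

/-- AbC does not preserve monotonicity: there is `k₁` such that for all
`k ≥ k₁`, on `σ` AbC picks veto (output a≻b≻c≻d, rank of b is 2), while on `σ'`, obtained
by promoting `b`, AbC picks plurality (output d≻c≻b≻a, rank of b is 3); this violates
monotonicity even though plurality and veto are both monotonic. -/
theorem abC_not_preserve_monotonicity :
    MonotonicSWF (posSWF (pluralityVec 4 (by norm_num)) : SWF (Fin 4) 4) ∧
    MonotonicSWF (posSWF (vetoVec 4 (by norm_num)) : SWF (Fin 4) 4) ∧
    (∃ k1 : ℕ, 1 ≤ k1 ∧ ∀ k, k1 ≤ k →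
      List.Forall₂ (RaisesWeak (1 : Fin 4)) (sigmaEx k) (sigmaEx' k) ∧
      AbCVec Fpv (sigmaEx k) = {vetoVec 4 (by norm_num)} ∧
      inducedAbCVec Fpv (sigmaEx k) = Ranking.toWeak rABCD ∧
      AbCVec Fpv (sigmaEx' k) = {pluralityVec 4 (by norm_num)} ∧
      inducedAbCVec Fpv (sigmaEx' k) = Ranking.toWeak rDCBA ∧
      rankIn (inducedAbCVec Fpv (sigmaEx k)) 1 = 2 ∧
      rankIn (inducedAbCVec Fpv (sigmaEx' k)) 1 = 3) ∧
    ¬ MonotonicSWF (inducedAbCVec (A := Fin 4) Fpv) := by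
  refine ⟨mono_posSWF _, mono_posSWF _, ⟨200, by norm_num, ?_⟩, ?_⟩
  · intro k hk
    have hk1 : 1 ≤ k := by omega
    have hi1 : inducedAbCVec Fpv (sigmaEx k) = Ranking.toWeak rABCD := by
      rw [induced_eq _ _ (AbCVec_sigma k hk), posSWF_veto_sigma k hk1]
    have hi2 : inducedAbCVec Fpv (sigmaEx' k) = Ranking.toWeak rDCBA := by
      rw [induced_eq _ _ (AbCVec_sigma' k hk), posSWF_plur_sigma' k hk1]
    exact ⟨forall2_sigma k, AbCVec_sigma k hk, hi1, AbCVec_sigma' k hk, hi2,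
      by rw [hi1, rankIn_rABCD], by rw [hi2, rankIn_rDCBA]⟩
  · intro hmono
    have h := hmono 1 (sigmaEx 200) (sigmaEx' 200) (forall2_sigma 200)
    have hi1 : inducedAbCVec Fpv (sigmaEx 200) = Ranking.toWeak rABCD := by
      rw [induced_eq _ _ (AbCVec_sigma 200 (le_refl _)),
        posSWF_veto_sigma 200 (by norm_num)]
    have hi2 : inducedAbCVec Fpv (sigmaEx' 200) = Ranking.toWeak rDCBA := by
      rw [induced_eq _ _ (AbCVec_sigma' 200 (le_refl _)),
        posSWF_plur_sigma' 200 (by norm_num)]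
    rw [hi1, hi2, rankIn_rABCD, rankIn_rDCBA] at h
    omega

end
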